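/- Let T be a finite tree on k vertices with graph distance d(i,j), and 0 ≤ ρ < 1. Then the k×k matrix M with entries M_{ij} = ρ^{d(i,j)} is positive definite. -/

import Mathlib

open Matrix SimpleGraph Finset

set_option linter.unusedSectionVars false
set_option maxHeartbeats 1000000

-- Cauchy–Schwarz for a real positive-semidefinite matrix
lemma psd_cauchy_schwarz {n : Type*} [Fintype n] (M : Matrix n n ℝ) (hM : M.PosSemidef)
    (x y : n → ℝ) : (x ⬝ᵥ M *ᵥ y)^2 ≤ (x ⬝ᵥ M *ᵥ x) * (y ⬝ᵥ M *ᵥ y) := by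
  have hsymm : ∀ a b : n → ℝ, a ⬝ᵥ M *ᵥ b = b ⬝ᵥ M *ᵥ a := by
    intro a b
    have hM' : ∀ i j, M i j = M j i := by
      intro i j
      have := congrFun (congrFun hM.1 i) j
      simpa [Matrix.conjTranspose_apply] using this.symm
    simp only [dotProduct, Matrix.mulVec, dotProduct, Finset.mul_sum]
    rw [Finset.sum_comm]
    refine Finset.sum_congr rfl fun j _ => Finset.sum_congr rfl fun i _ => ?_
    rw [hM' i j]; ring
  have key : ∀ t : ℝ, 0 ≤ (y ⬝ᵥ M *ᵥ y) * (t * t) + (2 * (x ⬝ᵥ M *ᵥ y)) * t + (x ⬝ᵥ M *ᵥ x) := by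
    intro t
    have h := hM.dotProduct_mulVec_nonneg (x + t • y)
    have hstar : star (x + t • y) = x + t • y := by
      funext i; simp
    rw [hstar] at h
    have hexp : (x + t • y) ⬝ᵥ M *ᵥ (x + t • y)
        = (y ⬝ᵥ M *ᵥ y) * (t * t) + (2 * (x ⬝ᵥ M *ᵥ y)) * t + (x ⬝ᵥ M *ᵥ x) := by
      rw [Matrix.mulVec_add, Matrix.mulVec_smul, add_dotProduct,
        smul_dotProduct, dotProduct_add, dotProduct_add,
        dotProduct_smul, dotProduct_smul, hsymm y x]
      simp [smul_eq_mul]; ring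
    rw [hexp] at h
    exact h
  have hd := discrim_le_zero key
  rw [discrim] at hd
  nlinarith [hd]

section
variable {V : Type} [Fintype V] [DecidableEq V] {G : SimpleGraph V}

lemma cons_eq_cons_snd {v r a b : V} {h1 : G.Adj v a} {h2 : G.Adj v b}
    {p : G.Walk a r} {q : G.Walk b r} (h : Walk.cons h1 p = Walk.cons h2 q) : a = b := by
  have h' := congrArg (fun w : G.Walk v r => w.support.tail.head?) h
  simp only [Walk.support_cons, List.tail_cons] at h'
  rw [Walk.support_eq_cons p, Walk.support_eq_cons q] at h'
  simp only [List.head?_cons, Option.some.injEq] at h'; exact h'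

lemma exists_leaf (hconn : G.Connected) (hacyclic : G.IsAcyclic)
    (h2 : 2 ≤ Fintype.card V) :
    ∃ v u : V, G.Adj v u ∧ ∀ w, G.Adj v w → w = u := by
  have hne : Nonempty V := Fintype.card_pos_iff.mp (by omega)
  obtain ⟨r⟩ := hne
  obtain ⟨v, -, hmax⟩ := Finset.exists_max_image Finset.univ (fun w => G.dist r w)
    ⟨r, Finset.mem_univ r⟩
  have hvr : v ≠ r := by
    obtain ⟨w, hw⟩ := Fintype.exists_ne_of_one_lt_card (by omega) r
    intro hvr
    have h1 : 0 < G.dist r w := (hconn.pos_dist_of_ne (Ne.symm hw))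
    have h2 := hmax w (Finset.mem_univ w)
    rw [hvr, SimpleGraph.dist_self] at h2
    omega
  -- every neighbor w of v gives a canonical path from v to r
  have hpath : ∀ w (hw : G.Adj v w), ∃ (p : G.Walk w r),
      (Walk.cons hw p).IsPath := by
    intro w hw
    obtain ⟨p, hp, hlen⟩ := hconn.exists_path_of_dist r w
    have hvp : v ∉ p.support := by
      intro hv
      have h1 : G.dist r v ≤ (p.takeUntil v hv).length := SimpleGraph.dist_le _
      have h2 : G.dist v w ≤ (p.dropUntil v hv).length := SimpleGraph.dist_le _
      have h3 : (p.takeUntil v hv).length + (p.dropUntil v hv).length = p.length := by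
        rw [← Walk.length_append, Walk.take_spec]
      have h4 : 0 < G.dist v w := hconn.pos_dist_of_ne hw.ne
      have h5 := hmax w (Finset.mem_univ w)
      omega
    exact ⟨p.reverse, (hp.reverse).cons (by simpa using hvp)⟩
  obtain ⟨p0⟩ := hconn v r
  obtain ⟨u, hu, p0', -⟩ := Walk.exists_eq_cons_of_ne hvr p0
  refine ⟨v, u, hu, fun w hw => ?_⟩
  obtain ⟨pw, hqwp⟩ := hpath w hw
  obtain ⟨pu, hqup⟩ := hpath u hu
  have heq : (⟨_, hqwp⟩ : G.Path v r) = ⟨_, hqup⟩ := hacyclic.path_unique _ _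
  exact cons_eq_cons_snd (congrArg Subtype.val heq)

variable {v u : V}

/-- A path between vertices other than a leaf `v` avoids `v`. -/
lemma path_avoids_leaf (huniq : ∀ w, G.Adj v w → w = u) {i j : V} (hi : i ≠ v) (hj : j ≠ v)
    (p : G.Walk i j) (hp : p.IsPath) : v ∉ p.support := by
  intro hmem
  have hspec := p.take_spec hmem
  have hnodup : ((p.takeUntil v hmem).append (p.dropUntil v hmem)).support.Nodup := by
    rw [hspec]; exact hp.support_nodup
  rw [Walk.support_append, List.nodup_append] at hnodup
  obtain ⟨-, -, hdisj⟩ := hnodup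
  -- u is in the tail of the drop part
  obtain ⟨b, hb, r', hr'⟩ := Walk.exists_eq_cons_of_ne (Ne.symm hj) (p.dropUntil v hmem)
  have hbu : b = u := huniq b hb
  have hu2 : u ∈ (p.dropUntil v hmem).support.tail := by
    rw [hr', Walk.support_cons, List.tail_cons, ← hbu]
    exact Walk.start_mem_support r'
  -- u is in the take part
  obtain ⟨c, hc, q', hq'⟩ := Walk.exists_eq_cons_of_ne (Ne.symm hi) (p.takeUntil v hmem).reverse
  have hcu : c = u := huniq c hc
  have hu1 : u ∈ (p.takeUntil v hmem).support := by
    have : u ∈ (p.takeUntil v hmem).reverse.support := by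
      rw [hq', Walk.support_cons, ← hcu]
      exact List.mem_cons_of_mem _ (Walk.start_mem_support q')
    simpa [Walk.support_reverse] using this
  exact hdisj u hu1 u hu2 rfl

/-- Lift a walk avoiding `v` to the induced graph on `{x // x ≠ v}`. -/
lemma lift_walk_ne {a b : V} (p : G.Walk a b) (ha : a ≠ v) (hb : b ≠ v)
    (h : v ∉ p.support) :
    ∃ q : (G.comap (Subtype.val : {x : V // x ≠ v} → V)).Walk ⟨a, ha⟩ ⟨b, hb⟩,
      q.length = p.length := by
  induction p with
  | nil => exact ⟨Walk.nil, rfl⟩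
  | @cons a c b hac p ih =>
    rw [Walk.support_cons] at h
    have h' : v ∉ p.support := fun hm => h (List.mem_cons_of_mem _ hm)
    have hc : c ≠ v := fun hcv => h' (hcv ▸ Walk.start_mem_support p)
    obtain ⟨q, hq⟩ := ih hc hb h'
    exact ⟨Walk.cons (by simpa using hac) q, by simp [hq]⟩

lemma comap_connected (hconn : G.Connected) (huniq : ∀ w, G.Adj v w → w = u) (hvu : u ≠ v) :
    (G.comap (Subtype.val : {x : V // x ≠ v} → V)).Connected := by
  rw [connected_iff]
  refine ⟨fun a b => ?_, ⟨⟨u, hvu⟩⟩⟩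
  obtain ⟨p0⟩ := hconn a.1 b.1
  have hp := p0.toPath.2
  have havoid := path_avoids_leaf huniq a.2 b.2 _ hp
  obtain ⟨q, -⟩ := lift_walk_ne (p0.toPath : G.Walk a.1 b.1) a.2 b.2 havoid
  exact ⟨(q.copy (Subtype.ext rfl) (Subtype.ext rfl))⟩

lemma comap_acyclic (hacyclic : G.IsAcyclic) :
    (G.comap (Subtype.val : {x : V // x ≠ v} → V)).IsAcyclic := by
  intro x c hc
  have hinj : Function.Injective (Subtype.val : {x : V // x ≠ v} → V) := Subtype.val_injective
  have := hc.map (f := (SimpleGraph.Embedding.comap ⟨Subtype.val, hinj⟩ G).toHom) hinj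
  exact hacyclic _ this

lemma comap_dist_eq (hconn : G.Connected) (huniq : ∀ w, G.Adj v w → w = u) (hvu : u ≠ v)
    (i j : {x : V // x ≠ v}) :
    (G.comap (Subtype.val : {x : V // x ≠ v} → V)).dist i j = G.dist i.1 j.1 := by
  set G' := G.comap (Subtype.val : {x : V // x ≠ v} → V)
  have hconn' := comap_connected hconn huniq hvu
  apply le_antisymm
  · obtain ⟨p, hp, hlen⟩ := hconn.exists_path_of_dist i.1 j.1
    have havoid := path_avoids_leaf huniq i.2 j.2 p hp
    obtain ⟨q, hq⟩ := lift_walk_ne p i.2 j.2 havoid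
    calc G'.dist i j ≤ (q.copy (Subtype.ext rfl) (Subtype.ext rfl)).length := SimpleGraph.dist_le _
    _ = G.dist i.1 j.1 := by rw [Walk.length_copy, hq, hlen]
  · obtain ⟨q, hq⟩ := hconn'.exists_walk_length_eq_dist i j
    have hinj : Function.Injective (Subtype.val : {x : V // x ≠ v} → V) := Subtype.val_injective
    have : G.dist i.1 j.1 ≤ (q.map (SimpleGraph.Embedding.comap ⟨Subtype.val, hinj⟩ G).toHom).length :=
      SimpleGraph.dist_le _
    rwa [Walk.length_map, hq] at this

lemma dist_leaf_eq (hconn : G.Connected) (hadj : G.Adj v u)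
    (huniq : ∀ w, G.Adj v w → w = u) {j : V} (hj : j ≠ v) :
    G.dist v j = 1 + G.dist u j := by
  have hle : G.dist v j ≤ 1 + G.dist u j := by
    have := hconn.dist_triangle (v := u) (u := v) (w := j)
    rwa [SimpleGraph.dist_eq_one_iff_adj.mpr hadj] at this
  have hge : 1 + G.dist u j ≤ G.dist v j := by
    obtain ⟨p, hp, hlen⟩ := hconn.exists_path_of_dist v j
    obtain ⟨b, hb, q, hq⟩ := Walk.exists_eq_cons_of_ne (Ne.symm hj) p
    have hbu : b = u := huniq b hb
    have h1 : G.dist u j ≤ q.length := by rw [← hbu]; exact SimpleGraph.dist_le q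
    have h2 : p.length = q.length + 1 := by rw [hq]; simp
    omega
  omega
end

lemma tree_aux (ρ : ℝ) (h0 : 0 ≤ ρ) (h1 : ρ < 1) :
    ∀ (n : ℕ) (V : Type) [Fintype V] [DecidableEq V] (G : SimpleGraph V),
      Fintype.card V = n → G.Connected → G.IsAcyclic →
      (Matrix.of fun i j : V => ρ ^ G.dist i j).PosDef := by
  intro n
  induction n with
  | zero =>
    intro V _ _ G hcard hconn hacyc
    have : IsEmpty V := Fintype.card_eq_zero_iff.mp hcard
    constructor
    · ext i j; exact isEmptyElim i
    · intro x hx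
      exact absurd (Finsupp.ext fun i => isEmptyElim i) hx
  | succ n ih =>
    intro V _ _ G hcard hconn hacyc
    by_cases hsmall : Fintype.card V ≤ 1
    · have hsub : Subsingleton V := Fintype.card_le_one_iff_subsingleton.mp hsmall
      have hM : (Matrix.of fun i j : V => ρ ^ G.dist i j) = 1 := by
        ext i j
        have hij : i = j := Subsingleton.elim i j
        subst hij
        simp [SimpleGraph.dist_self]
      rw [hM]
      exact Matrix.PosDef.one
    · obtain ⟨v, u, hadj, huniq⟩ := exists_leaf hconn hacyc (by omega)
      have hvu : u ≠ v := hadj.ne'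
      have hcard' : Fintype.card {x : V // x ≠ v} = n := by
        have hc := Fintype.card_subtype_compl (fun x : V => x = v)
        rw [Fintype.card_subtype_eq, hcard] at hc
        simpa using hc
      have hconn' := comap_connected hconn huniq hvu
      have hacyc' := comap_acyclic (v := v) hacyc
      have hMpos' := ih {x : V // x ≠ v} (G.comap Subtype.val) hcard' hconn' hacyc'
      set G' := G.comap (Subtype.val : {x : V // x ≠ v} → V) with hG'
      set M' : Matrix {x : V // x ≠ v} {x : V // x ≠ v} ℝ :=
        Matrix.of fun i j => ρ ^ G'.dist i j with hM'
      set u' : {x : V // x ≠ v} := ⟨u, hvu⟩ with hu'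
      refine Matrix.PosDef.of_dotProduct_mulVec_pos ?_ ?_
      · ext i j
        simp only [Matrix.conjTranspose_apply, Matrix.of_apply, star_trivial]
        rw [SimpleGraph.dist_comm]
      · intro x hx
        have hstar : star x = x := funext fun i => rfl
        rw [hstar]
        set a : ℝ := x v with ha
        set s : ℝ := ∑ j : {x : V // x ≠ v}, ρ ^ G'.dist u' j * x j.1 with hs
        have split : ∀ f : V → ℝ, ∑ i, f i = f v + ∑ i : {x : V // x ≠ v}, f i.1 := by
          intro f
          rw [Fintype.sum_eq_add_sum_compl v f]
          congr 1
          exact Finset.sum_subtype _ (by simp) f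
        have hdist_v : ∀ j : {x : V // x ≠ v}, G.dist v j.1 = 1 + G'.dist u' j := by
          intro j
          rw [dist_leaf_eq hconn hadj huniq j.2, comap_dist_eq hconn huniq hvu u' j]
        have hdist' : ∀ i j : {x : V // x ≠ v}, G.dist i.1 j.1 = G'.dist i j :=
          fun i j => (comap_dist_eq hconn huniq hvu i j).symm
        have inner_v : ∑ j, ρ ^ G.dist v j * x j = a + ρ * s := by
          rw [split (fun j => ρ ^ G.dist v j * x j)]
          have h1 : ρ ^ G.dist v v * x v = a := by
            rw [SimpleGraph.dist_self]; simp [ha]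
          have h2 : ∑ j : {x : V // x ≠ v}, ρ ^ G.dist v j.1 * x j.1 = ρ * s := by
            rw [hs, Finset.mul_sum]
            refine Finset.sum_congr rfl fun j _ => ?_
            rw [hdist_v j, pow_add, pow_one]
            ring
          rw [h1, h2]
        have inner_i : ∀ i : {x : V // x ≠ v}, ∑ j, ρ ^ G.dist i.1 j * x j
            = ρ * ρ ^ G'.dist u' i * a + ∑ j : {x : V // x ≠ v}, ρ ^ G'.dist i j * x j.1 := by
          intro i
          rw [split (fun j => ρ ^ G.dist i.1 j * x j)]
          congr 1
          · rw [SimpleGraph.dist_comm, hdist_v i, pow_add, pow_one, ha]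
          · exact Finset.sum_congr rfl fun j _ => by rw [hdist' i j]
        set Q' : ℝ := ∑ i : {x : V // x ≠ v}, x i.1 *
          ∑ j : {x : V // x ≠ v}, ρ ^ G'.dist i j * x j.1 with hQ'def
        have hQ : x ⬝ᵥ (Matrix.of fun i j : V => ρ ^ G.dist i j) *ᵥ x
            = a * (a + ρ * s) + (ρ * a * s + Q') := by
          have hexp : x ⬝ᵥ (Matrix.of fun i j : V => ρ ^ G.dist i j) *ᵥ x
              = ∑ i, x i * ∑ j, ρ ^ G.dist i j * x j := by
            simp [dotProduct, Matrix.mulVec, Matrix.of_apply]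
          rw [hexp, split (fun i => x i * ∑ j, ρ ^ G.dist i j * x j)]
          congr 1
          · rw [inner_v, ha]
          · have hterm : ∀ i : {x : V // x ≠ v}, x i.1 * ∑ j, ρ ^ G.dist i.1 j * x j
                = ρ * a * (ρ ^ G'.dist u' i * x i.1)
                  + x i.1 * ∑ j : {x : V // x ≠ v}, ρ ^ G'.dist i j * x j.1 := by
              intro i
              rw [inner_i i]
              ring
            rw [Finset.sum_congr rfl fun i _ => hterm i, Finset.sum_add_distrib,
              ← Finset.mul_sum, hQ'def, hs]
        -- relate Q' and s to matrix expressions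
        set x' : {x : V // x ≠ v} → ℝ := fun i => x i.1 with hx'def
        have hQ'eq : Q' = x' ⬝ᵥ M' *ᵥ x' := by
          simp [hQ'def, dotProduct, Matrix.mulVec, Matrix.of_apply, hM', hx'def]
        have hs_eq : s = (Pi.single u' 1 : {x : V // x ≠ v} → ℝ) ⬝ᵥ M' *ᵥ x' := by
          rw [single_dotProduct, one_mul]
          simp [hs, Matrix.mulVec, dotProduct, hM', hx'def]
        have hee : (Pi.single u' 1 : {x : V // x ≠ v} → ℝ) ⬝ᵥ M' *ᵥ (Pi.single u' 1) = 1 := by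
          rw [single_dotProduct, one_mul]
          simp [Matrix.mulVec_single, hM', SimpleGraph.dist_self]
        have hcs := psd_cauchy_schwarz M' hMpos'.posSemidef (Pi.single u' 1) x'
        rw [hee, one_mul, ← hs_eq, ← hQ'eq] at hcs
        by_cases hx0 : x' = 0
        · have hs0 : s = 0 := by
            rw [hs]
            refine Finset.sum_eq_zero fun j _ => ?_
            have : x j.1 = 0 := congrFun hx0 j
            rw [this, mul_zero]
          have hQ'0 : Q' = 0 := by
            rw [hQ'def]
            refine Finset.sum_eq_zero fun i _ => ?_
            have : x i.1 = 0 := congrFun hx0 i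
            rw [this, zero_mul]
          have hane : a ≠ 0 := by
            intro ha0
            apply hx
            funext i
            by_cases hiv : i = v
            · rw [hiv]; exact ha0
            · exact congrFun hx0 ⟨i, hiv⟩
          rw [hQ, hs0, hQ'0]
          have : a * (a + ρ * 0) + (ρ * a * 0 + 0) = a * a := by ring
          rw [this]
          exact mul_self_pos.mpr hane
        · have hQ'pos : 0 < Q' := by
            rw [hQ'eq]
            have hst : star x' = x' := funext fun i => rfl
            have := hMpos'.dotProduct_mulVec_pos hx0
            rwa [hst] at this
          rw [hQ]
          have hρ2 : ρ ^ 2 < 1 := by nlinarith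
          nlinarith [sq_nonneg (a + ρ * s), mul_le_mul_of_nonneg_left hcs (sq_nonneg ρ),
            mul_lt_mul_of_pos_right hρ2 hQ'pos, sq_nonneg ρ]

/-- For a finite tree `T` on `k` vertices with graph distance `d`, and `0 ≤ ρ < 1`,
the matrix `M` with `M i j = ρ^(d i j)` is positive definite. -/
theorem tree_ar1_posDef {k : ℕ} (G : SimpleGraph (Fin k)) (hconn : G.Connected)
    (hacyclic : G.IsAcyclic) (ρ : ℝ) (h0 : 0 ≤ ρ) (h1 : ρ < 1) :
    (Matrix.of fun i j : Fin k => ρ ^ G.dist i j).PosDef :=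
  tree_aux ρ h0 h1 k (Fin k) G (Fintype.card_fin k) hconn hacyclic
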